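/- Let G be a finite simple graph on vertex set [n] = {1,...,n} and G' a subgraph of G, with edge ideals J = I(G') and I = I(G) in K[x_1,...,x_n] over a field K. Then J ∩ I^t = J·I^{t-1} for all t ≥ 1 if and only if G' is both an almost C_3-embedded and an almost P_3-embedded subgraph of G. -/

import Mathlib

open MvPolynomial Pointwise


/-- The edge ideal of a finite simple graph on `[n]`: the ideal of `K[x_1,…,x_n]`
generated by the monomials `x_i x_j` with `{i,j}` an edge of `G`. -/
noncomputable def edgeIdeal (K : Type) [Field K] {n : ℕ} (G : SimpleGraph (Fin n)) :
    Ideal (MvPolynomial (Fin n) K) :=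
  Ideal.span {p | ∃ i j : Fin n, G.Adj i j ∧ p = MvPolynomial.X i * MvPolynomial.X j}

/-- `G'` is an almost `C₃`-embedded subgraph of `G`: for every 3-cycle `i–j–k–i` in `G`
with `{i,j} ∈ E(G')`, either `{i,k} ∈ E(G')` or `{j,k} ∈ E(G')`. -/
def AlmostC3Embedded {n : ℕ} (G' G : SimpleGraph (Fin n)) : Prop :=
  ∀ i j k : Fin n, G.Adj i j → G.Adj j k → G.Adj k i → G'.Adj i j →
    G'.Adj i k ∨ G'.Adj j k

/-- `G'` is an almost `P₃`-embedded subgraph of `G`: for every path `i'–i–j–j'` in `G` on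
four distinct vertices with `{i,j} ∈ E(G')` and `{i',j'} ∉ E(G)`, one of:
`{i',i} ∈ E(G')`; `{j,j'} ∈ E(G')`; `{i',j} ∈ E(G')` and `{i,j'} ∈ E(G)`;
`{i,j'} ∈ E(G')` and `{i',j} ∈ E(G)`. -/
def AlmostP3Embedded {n : ℕ} (G' G : SimpleGraph (Fin n)) : Prop :=
  ∀ i' i j j' : Fin n, i' ≠ j → i ≠ j' → i' ≠ j' →
    G.Adj i' i → G.Adj i j → G.Adj j j' → G'.Adj i j → ¬ G.Adj i' j' →
    (G'.Adj i' i ∨ G'.Adj j j' ∨ (G'.Adj i' j ∧ G.Adj i j') ∨ (G'.Adj i j' ∧ G.Adj i' j))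


namespace VVaux

variable {n : ℕ}

/-- exponent vector of an edge -/
noncomputable def eV (i j : Fin n) : Fin n →₀ ℕ := Finsupp.single i 1 + Finsupp.single j 1

lemma eV_comm (i j : Fin n) : eV i j = eV j i := add_comm _ _

lemma eV_apply (i j x : Fin n) :
    eV i j x = (if i = x then 1 else 0) + (if j = x then 1 else 0) := by
  simp [eV, Finsupp.single_apply]

/-- edge exponent set of a graph -/
def ES (G : SimpleGraph (Fin n)) : Set (Fin n →₀ ℕ) := {s | ∃ i j, G.Adj i j ∧ s = eV i j}

/-- t-fold sums of edge exponents -/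
def St (G : SimpleGraph (Fin n)) (t : ℕ) : Set (Fin n →₀ ℕ) :=
  {s | ∃ M : Multiset (Fin n →₀ ℕ), M.card = t ∧ (∀ x ∈ M, x ∈ ES G) ∧ s = M.sum}

variable {K : Type} [Field K]

lemma edgeIdeal_eq (G : SimpleGraph (Fin n)) :
    edgeIdeal K G = Ideal.span ((fun s => monomial s (1 : K)) '' ES G) := by
  unfold edgeIdeal
  congr 1
  ext p
  constructor
  · rintro ⟨i, j, hij, rfl⟩
    exact ⟨eV i j, ⟨i, j, hij, rfl⟩, by simp [eV, X, monomial_mul]⟩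
  · rintro ⟨s, ⟨i, j, hij, rfl⟩, rfl⟩
    exact ⟨i, j, hij, by simp [eV, X, monomial_mul]⟩

lemma span_mon_mul (S T : Set (Fin n →₀ ℕ)) :
    Ideal.span ((fun s => monomial s (1 : K)) '' S) * Ideal.span ((fun s => monomial s (1 : K)) '' T)
      = Ideal.span ((fun s => monomial s (1 : K)) '' (S + T)) := by
  rw [Ideal.span_mul_span']
  congr 1
  ext p
  constructor
  · rintro ⟨_, ⟨s, hs, rfl⟩, _, ⟨t, ht, rfl⟩, rfl⟩
    exact ⟨s + t, Set.add_mem_add hs ht, by simp [monomial_mul]⟩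
  · rintro ⟨_, ⟨s, hs, t, ht, rfl⟩, rfl⟩
    exact ⟨_, ⟨s, hs, rfl⟩, _, ⟨t, ht, rfl⟩, by simp [monomial_mul]⟩

lemma St_zero (G : SimpleGraph (Fin n)) : St G 0 = {0} := by
  ext s
  constructor
  · rintro ⟨M, hM, _, rfl⟩
    rw [Multiset.card_eq_zero] at hM
    simp [hM]
  · rintro rfl
    exact ⟨0, rfl, by simp, by simp⟩

lemma St_succ (G : SimpleGraph (Fin n)) (t : ℕ) : St G (t + 1) = ES G + St G t := by
  ext s
  constructor
  · rintro ⟨M, hM, hall, rfl⟩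
    have hne : M ≠ 0 := by rintro rfl; simp at hM
    obtain ⟨x, hx⟩ := Multiset.exists_mem_of_ne_zero hne
    refine ⟨x, hall x hx, (M.erase x).sum, ⟨M.erase x, ?_, fun y hy => hall y (Multiset.mem_of_mem_erase hy), rfl⟩, ?_⟩
    · rw [Multiset.card_erase_of_mem hx, hM]; rfl
    · show x + (M.erase x).sum = M.sum
      rw [← Multiset.sum_cons, Multiset.cons_erase hx]
  · rintro ⟨a, ha, _, ⟨M, hM, hall, rfl⟩, rfl⟩
    refine ⟨a ::ₘ M, by simp [hM], ?_, by simp⟩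
    intro y hy
    rcases Multiset.mem_cons.mp hy with rfl | hy
    · exact ha
    · exact hall y hy

lemma pow_eq (G : SimpleGraph (Fin n)) (t : ℕ) :
    (edgeIdeal K G) ^ t = Ideal.span ((fun s => monomial s (1 : K)) '' St G t) := by
  induction t with
  | zero =>
    rw [pow_zero, St_zero]
    simp only [Set.image_singleton, monomial_zero', C_1]
    rw [Ideal.span_singleton_one, Ideal.one_eq_top]
  | succ t ih =>
    rw [pow_succ, ih, edgeIdeal_eq, mul_comm, span_mon_mul, St_succ, ← St_succ]

lemma ES_mono {G' G : SimpleGraph (Fin n)} (h : G' ≤ G) : ES G' ⊆ ES G := by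
  rintro s ⟨i, j, hij, rfl⟩
  exact ⟨i, j, h hij, rfl⟩

lemma mem_lhs {G' G : SimpleGraph (Fin n)} {t : ℕ} {p : MvPolynomial (Fin n) K} :
    p ∈ edgeIdeal K G' ⊓ (edgeIdeal K G) ^ t ↔
      ∀ xi ∈ p.support, ((∃ s ∈ ES G', s ≤ xi) ∧ (∃ u ∈ St G t, u ≤ xi)) := by
  rw [Submodule.mem_inf, edgeIdeal_eq, pow_eq, mem_ideal_span_monomial_image,
    mem_ideal_span_monomial_image]
  constructor
  · rintro ⟨h1, h2⟩ xi hxi; exact ⟨h1 xi hxi, h2 xi hxi⟩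
  · intro hh; exact ⟨fun xi hxi => (hh xi hxi).1, fun xi hxi => (hh xi hxi).2⟩

lemma mem_rhs {G' G : SimpleGraph (Fin n)} {t : ℕ} {p : MvPolynomial (Fin n) K} :
    p ∈ edgeIdeal K G' * (edgeIdeal K G) ^ t ↔
      ∀ xi ∈ p.support, ∃ v ∈ ES G' + St G t, v ≤ xi := by
  rw [edgeIdeal_eq, pow_eq, span_mon_mul, mem_ideal_span_monomial_image]

lemma eq_iff (K : Type) [Field K] {G' G : SimpleGraph (Fin n)} (h : G' ≤ G) {t : ℕ} (ht : 1 ≤ t) :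
    (edgeIdeal K G' ⊓ (edgeIdeal K G) ^ t = edgeIdeal K G' * (edgeIdeal K G) ^ (t - 1)) ↔
      ∀ m : Fin n →₀ ℕ, (∃ s ∈ ES G', s ≤ m) → (∃ u ∈ St G t, u ≤ m) →
        ∃ v ∈ ES G' + St G (t - 1), v ≤ m := by
  classical
  constructor
  · intro heq m h1 h2
    have hm : (monomial m (1 : K)) ∈ edgeIdeal K G' ⊓ (edgeIdeal K G) ^ t := by
      rw [mem_lhs]
      intro xi hxi
      rw [support_monomial, if_neg one_ne_zero, Finset.mem_singleton] at hxi
      subst hxi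
      exact ⟨h1, h2⟩
    rw [heq, mem_rhs] at hm
    exact hm m (by rw [support_monomial, if_neg one_ne_zero]; simp)
  · intro hc
    ext p
    rw [mem_lhs, mem_rhs]
    constructor
    · intro hp xi hxi
      exact hc xi (hp xi hxi).1 (hp xi hxi).2
    · intro hp xi hxi
      obtain ⟨v, ⟨a, ha, b, hb, rfl⟩, hvle⟩ := hp xi hxi
      refine ⟨⟨a, ha, le_trans (le_add_of_nonneg_right zero_le) hvle⟩, ⟨a + b, ?_, hvle⟩⟩
      have : a + b ∈ St G (t - 1 + 1) := by
        rw [St_succ]; exact ⟨a, ES_mono h ha, b, hb, rfl⟩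
      rwa [Nat.sub_add_cancel ht] at this

lemma sum_apply' (M : Multiset (Fin n →₀ ℕ)) (x : Fin n) :
    M.sum x = (M.map (fun f : Fin n →₀ ℕ => f x)).sum := by
  refine Multiset.induction_on M (by simp) ?_
  intro a s ih
  simp [Finsupp.add_apply, ih]

lemma sum_erase_apply {M : Multiset (Fin n →₀ ℕ)} {e : Fin n →₀ ℕ} (he : e ∈ M) (x : Fin n) :
    (M.erase e).sum x + e x = M.sum x := by
  conv_rhs => rw [← Multiset.cons_erase he]
  rw [Multiset.sum_cons, Finsupp.add_apply]
  ring

lemma exists_edge_at {G : SimpleGraph (Fin n)} {M : Multiset (Fin n →₀ ℕ)}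
    (hall : ∀ x ∈ M, x ∈ ES G) {j : Fin n} (hj : 0 < M.sum j) :
    ∃ e ∈ M, ∃ c, G.Adj c j ∧ e = eV c j := by
  have : ∃ e ∈ M, 0 < e j := by
    by_contra hc
    push_neg at hc
    rw [sum_apply' M j] at hj
    have := Multiset.sum_eq_zero (s := M.map (fun f : Fin n →₀ ℕ => f j)) ?_
    · omega
    · intro x hx
      obtain ⟨e, he, rfl⟩ := Multiset.mem_map.mp hx
      exact Nat.le_zero.mp (hc e he)
  obtain ⟨e, heM, hej⟩ := this
  obtain ⟨a, b, hab, rfl⟩ := hall e heM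
  rw [eV_apply] at hej
  by_cases hbj : b = j
  · subst hbj; exact ⟨eV a b, heM, a, hab, rfl⟩
  · have haj : a = j := by
      by_cases haj : a = j
      · exact haj
      · simp [haj, hbj] at hej
    subst haj
    exact ⟨eV a b, heM, b, hab.symm, eV_comm a b⟩

lemma single_step {M : Multiset (Fin n →₀ ℕ)} {e m : Fin n →₀ ℕ} {i j : Fin n} (hij : i ≠ j)
    (heM : e ∈ M) (hum : M.sum ≤ m)
    (hi' : M.sum i < m i ∨ 1 ≤ e i) (hj' : M.sum j < m j ∨ 1 ≤ e j) :
    eV i j + (M.erase e).sum ≤ m := by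
  have h1i := sum_erase_apply heM i
  have h2i := Finsupp.le_def.mp hum i
  have h1j := sum_erase_apply heM j
  have h2j := Finsupp.le_def.mp hum j
  rw [Finsupp.le_def]
  intro x
  have h1x := sum_erase_apply heM x
  have h2x := Finsupp.le_def.mp hum x
  rw [Finsupp.add_apply, eV_apply]
  by_cases hxi : i = x <;> by_cases hxj : j = x
  · exact absurd (hxi.trans hxj.symm) hij
  · rw [if_pos hxi, if_neg hxj]
    subst hxi
    omega
  · rw [if_neg hxi, if_pos hxj]
    subst hxj
    omega
  · rw [if_neg hxi, if_neg hxj]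
    omega

lemma double_sum {M : Multiset (Fin n →₀ ℕ)} {ea eb : Fin n →₀ ℕ}
    (hea : ea ∈ M) (heb : eb ∈ M.erase ea) :
    ea + (eb + ((M.erase ea).erase eb).sum) = M.sum := by
  conv_rhs => rw [← Multiset.cons_erase hea, ← Multiset.cons_erase heb]
  rw [Multiset.sum_cons, Multiset.sum_cons]

lemma exchange {G' G : SimpleGraph (Fin n)} (h : G' ≤ G) (hC : AlmostC3Embedded G' G)
    (hP : AlmostP3Embedded G' G) {t : ℕ} (ht : 1 ≤ t) {m : Fin n →₀ ℕ}
    (h1 : ∃ s ∈ ES G', s ≤ m) (h2 : ∃ u ∈ St G t, u ≤ m) :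
    ∃ v ∈ ES G' + St G (t - 1), v ≤ m := by
  obtain ⟨s, ⟨i, j, hij, rfl⟩, hsm⟩ := h1
  obtain ⟨u, ⟨M, hcard, hall, rfl⟩, hum⟩ := h2
  have hmi : 1 ≤ m i := by
    have := Finsupp.le_def.mp hsm i
    rw [eV_apply, if_pos rfl] at this
    omega
  have hmj : 1 ≤ m j := by
    have := Finsupp.le_def.mp hsm j
    rw [eV_apply, if_neg hij.ne, if_pos rfl] at this
    omega
  by_cases hA : ∃ e ∈ M, e ∈ ES G'
  · obtain ⟨e, heM, heE⟩ := hA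
    refine ⟨e + (M.erase e).sum,
      ⟨e, heE, (M.erase e).sum,
        ⟨M.erase e, by rw [Multiset.card_erase_of_mem heM, hcard]; rfl,
          fun y hy => hall y (Multiset.mem_of_mem_erase hy), rfl⟩, rfl⟩, ?_⟩
    rw [show e + (M.erase e).sum = M.sum by
      conv_rhs => rw [← Multiset.cons_erase heM]; rw [Multiset.sum_cons]]
    exact hum
  push_neg at hA
  have mk1 : ∀ e ∈ M, eV i j + (M.erase e).sum ≤ m →
      ∃ v ∈ ES G' + St G (t - 1), v ≤ m := by
    intro e heM hle
    exact ⟨eV i j + (M.erase e).sum,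
      ⟨eV i j, ⟨i, j, hij, rfl⟩, (M.erase e).sum,
        ⟨M.erase e, by rw [Multiset.card_erase_of_mem heM, hcard]; rfl,
          fun y hy => hall y (Multiset.mem_of_mem_erase hy), rfl⟩, rfl⟩, hle⟩
  by_cases hi : M.sum i < m i
  · by_cases hj : M.sum j < m j
    · have hne : M ≠ 0 := by
        rintro rfl; simp at hcard; omega
      obtain ⟨e, heM⟩ := Multiset.exists_mem_of_ne_zero hne
      exact mk1 e heM (single_step hij.ne heM hum (Or.inl hi) (Or.inl hj))
    · have hMj : 0 < M.sum j := by
        have := Finsupp.le_def.mp hum j; omega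
      obtain ⟨e, heM, c, hcj, rfl⟩ := exists_edge_at hall hMj
      refine mk1 _ heM (single_step hij.ne heM hum (Or.inl hi) (Or.inr ?_))
      rw [eV_apply, if_pos rfl]; omega
  · have hMi : 0 < M.sum i := by
      have := Finsupp.le_def.mp hum i; omega
    obtain ⟨ea, heaM, k, hki, hea⟩ := exists_edge_at hall hMi
    by_cases hj : M.sum j < m j
    · refine mk1 _ heaM (single_step hij.ne heaM hum (Or.inr ?_) (Or.inl hj))
      rw [hea, eV_apply, if_neg hki.ne, if_pos rfl]
    · have hMj : 0 < M.sum j := by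
        have := Finsupp.le_def.mp hum j; omega
      obtain ⟨eb, hebM, l, hlj, heb⟩ := exists_edge_at hall hMj
      have hkj : k ≠ j := by
        intro heq
        rw [heq] at hea
        exact hA _ heaM ⟨j, i, hij.symm, hea⟩
      have hli : l ≠ i := by
        intro heq
        rw [heq] at heb
        exact hA _ hebM ⟨i, j, hij, heb⟩
      by_cases hkl : k = l
      · subst hkl
        rcases hC i j k (h hij) hlj.symm hki hij with hik | hjk
        · exact absurd ⟨i, k, hik, by rw [hea, eV_comm]⟩ (hA _ heaM)
        · exact absurd ⟨j, k, hjk, by rw [heb, eV_comm]⟩ (hA _ hebM)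
      have hebM' : eb ∈ M.erase ea := by
        refine (Multiset.mem_erase_of_ne ?_).mpr hebM
        intro hne
        have := congrArg (fun f : Fin n →₀ ℕ => f j) hne
        rw [hea, heb] at this
        simp [eV_apply, hlj.ne, hkj, hij.ne] at this
      have hcard2 : 2 ≤ t := by
        have hc1 := Multiset.card_erase_of_mem heaM
        rw [hcard] at hc1
        have hpos : 0 < Multiset.card (M.erase ea) :=
          Multiset.card_pos_iff_exists_mem.mpr ⟨eb, hebM'⟩
        rw [hc1] at hpos
        simp only [Nat.pred_eq_sub_one] at hpos
        omega
      have mk2 : ∀ f1 f2 : Fin n →₀ ℕ, (∃ a b, G'.Adj a b ∧ f1 = eV a b) →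
          f2 ∈ ES G → f1 + f2 = ea + eb → ∃ v ∈ ES G' + St G (t - 1), v ≤ m := by
        intro f1 f2 hf1 hf2 hsum
        refine ⟨f1 + (f2 ::ₘ (M.erase ea).erase eb).sum,
          ⟨f1, hf1, _, ⟨f2 ::ₘ (M.erase ea).erase eb, ?_, ?_, rfl⟩, rfl⟩, ?_⟩
        · rw [Multiset.card_cons, Multiset.card_erase_of_mem hebM',
            Multiset.card_erase_of_mem heaM, hcard]
          simp only [Nat.pred_eq_sub_one]
          omega
        · intro y hy
          rcases Multiset.mem_cons.mp hy with rfl | hy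
          · exact hf2
          · exact hall y (Multiset.mem_of_mem_erase (Multiset.mem_of_mem_erase hy))
        · rw [Multiset.sum_cons, ← add_assoc, hsum, add_assoc, double_sum heaM hebM']
          exact hum
      have key : eV i j + eV k l = ea + eb := by
        rw [hea, heb]
        unfold eV
        abel
      by_cases hG : G.Adj k l
      · exact mk2 (eV i j) (eV k l) ⟨i, j, hij, rfl⟩ ⟨k, l, hG, rfl⟩ key
      · rcases hP k i j l hkj (Ne.symm hli) hkl hki (h hij) hlj.symm hij hG with
          hki' | hjl' | ⟨hkj', hil'⟩ | ⟨hil', hkj'⟩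
        · exact absurd ⟨k, i, hki', hea⟩ (hA _ heaM)
        · exact absurd ⟨j, l, hjl', by rw [heb, eV_comm]⟩ (hA _ hebM)
        · refine mk2 (eV k j) (eV i l) ⟨k, j, hkj', rfl⟩ ⟨i, l, hil', rfl⟩ ?_
          rw [hea, heb]; unfold eV; abel
        · refine mk2 (eV i l) (eV k j) ⟨i, l, hil', rfl⟩ ⟨k, j, hkj', rfl⟩ ?_
          rw [hea, heb]; unfold eV; abel

lemma St_one (G : SimpleGraph (Fin n)) : St G 1 = ES G := by
  ext s
  constructor
  · rintro ⟨M, hM, hall, rfl⟩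
    obtain ⟨a, rfl⟩ := Multiset.card_eq_one.mp hM
    simpa using hall a (by simp)
  · intro hs
    exact ⟨{s}, by simp, by simpa using hs, by simp⟩

lemma mem_of_one_le {a b c d x : Fin n} (h : 1 ≤ (eV a b + eV c d) x) :
    x = a ∨ x = b ∨ x = c ∨ x = d := by
  by_contra hcon
  push_neg at hcon
  obtain ⟨n1, n2, n3, n4⟩ := hcon
  rw [Finsupp.add_apply, eV_apply, eV_apply, if_neg (Ne.symm n1), if_neg (Ne.symm n2),
    if_neg (Ne.symm n3), if_neg (Ne.symm n4)] at h
  omega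

lemma one_le_left {p q r s : Fin n} : 1 ≤ (eV p q + eV r s) p := by
  rw [Finsupp.add_apply, eV_apply, if_pos rfl]
  omega

lemma one_le_left' {p q r s : Fin n} : 1 ≤ (eV p q + eV r s) q := by
  rw [Finsupp.add_apply, eV_apply]
  by_cases hpq : p = q
  · rw [if_pos hpq]; omega
  · rw [if_neg hpq, if_pos rfl]; omega

lemma one_le_right {p q r s : Fin n} : 1 ≤ (eV p q + eV r s) r := by
  rw [add_comm]; exact one_le_left

lemma one_le_right' {p q r s : Fin n} : 1 ≤ (eV p q + eV r s) s := by
  rw [add_comm]; exact one_le_left'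

lemma c3_bash {G' G : SimpleGraph (Fin n)} {i j k p q r s : Fin n}
    (hpq : G'.Adj p q) (hrs : G.Adj r s)
    (hij : G.Adj i j) (hjk : G.Adj j k) (hki : G.Adj k i)
    (h1 : ¬ G'.Adj i k) (h2 : ¬ G'.Adj j k)
    (hle : eV p q + eV r s ≤ eV i k + eV j k) : False := by
  have hij' : i ≠ j := hij.ne
  have hjk' : j ≠ k := hjk.ne
  have hki' : k ≠ i := hki.ne
  have hp := mem_of_one_le (le_trans one_le_left (Finsupp.le_def.mp hle p))
  have hq := mem_of_one_le (le_trans one_le_left' (Finsupp.le_def.mp hle q))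
  have hr := mem_of_one_le (le_trans one_le_right (Finsupp.le_def.mp hle r))
  have hs := mem_of_one_le (le_trans one_le_right' (Finsupp.le_def.mp hle s))
  have Hi := Finsupp.le_def.mp hle i
  have Hj := Finsupp.le_def.mp hle j
  have Hk := Finsupp.le_def.mp hle k
  rcases hp with rfl | rfl | rfl | rfl <;> rcases hq with rfl | rfl | rfl | rfl <;>
    rcases hr with rfl | rfl | rfl | rfl <;> rcases hs with rfl | rfl | rfl | rfl <;>
  first
    | exact hpq.ne rfl
    | exact hrs.ne rfl
    | exact h1 hpq
    | exact h1 hpq.symm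
    | exact h2 hpq
    | exact h2 hpq.symm
    | (simp only [Finsupp.add_apply, eV_apply] at Hi Hj Hk <;>
       simp [hij', hjk', hki', Ne.symm hij', Ne.symm hjk', Ne.symm hki'] at Hi Hj Hk <;>
       omega)

set_option maxHeartbeats 1000000 in
lemma p3_bash {G' G : SimpleGraph (Fin n)} (hG : G' ≤ G) {i' i j j' p q r s : Fin n}
    (hpq : G'.Adj p q) (hrs : G.Adj r s)
    (d1 : i' ≠ j) (d2 : i ≠ j') (d3 : i' ≠ j') (d4 : i' ≠ i) (d5 : i ≠ j) (d6 : j ≠ j')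
    (n1 : ¬ G'.Adj i' i) (n2 : ¬ G'.Adj j j')
    (n3 : ¬ (G'.Adj i' j ∧ G.Adj i j')) (n4 : ¬ (G'.Adj i j' ∧ G.Adj i' j))
    (n5 : ¬ G.Adj i' j')
    (hle : eV p q + eV r s ≤ eV i' i + eV j j') : False := by
  have hp := mem_of_one_le (le_trans one_le_left (Finsupp.le_def.mp hle p))
  have hq := mem_of_one_le (le_trans one_le_left' (Finsupp.le_def.mp hle q))
  have hr := mem_of_one_le (le_trans one_le_right (Finsupp.le_def.mp hle r))
  have hs := mem_of_one_le (le_trans one_le_right' (Finsupp.le_def.mp hle s))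
  have H1 := Finsupp.le_def.mp hle i'
  have H2 := Finsupp.le_def.mp hle i
  have H3 := Finsupp.le_def.mp hle j
  have H4 := Finsupp.le_def.mp hle j'
  rcases hp with rfl | rfl | rfl | rfl <;> rcases hq with rfl | rfl | rfl | rfl <;>
    rcases hr with rfl | rfl | rfl | rfl <;> rcases hs with rfl | rfl | rfl | rfl <;>
  first
    | exact hpq.ne rfl
    | exact hrs.ne rfl
    | exact n1 hpq
    | exact n1 hpq.symm
    | exact n2 hpq
    | exact n2 hpq.symm
    | exact n5 (hG hpq)
    | exact n5 (hG hpq.symm)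
    | exact n5 hrs
    | exact n5 hrs.symm
    | exact n3 ⟨hpq, hrs⟩
    | exact n3 ⟨hpq, hrs.symm⟩
    | exact n3 ⟨hpq.symm, hrs⟩
    | exact n3 ⟨hpq.symm, hrs.symm⟩
    | exact n4 ⟨hpq, hrs⟩
    | exact n4 ⟨hpq, hrs.symm⟩
    | exact n4 ⟨hpq.symm, hrs⟩
    | exact n4 ⟨hpq.symm, hrs.symm⟩
    | (simp only [Finsupp.add_apply, eV_apply] at H1 H2 H3 H4 <;>
       simp [d1, d2, d3, d4, d5, d6, Ne.symm d1, Ne.symm d2, Ne.symm d3, Ne.symm d4,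
         Ne.symm d5, Ne.symm d6] at H1 H2 H3 H4 <;>
       omega)

lemma nec_C3 {G' G : SimpleGraph (Fin n)} (h : G' ≤ G)
    (hc : ∀ m : Fin n →₀ ℕ, (∃ s ∈ ES G', s ≤ m) → (∃ u ∈ St G 2, u ≤ m) →
      ∃ v ∈ ES G' + St G 1, v ≤ m) : AlmostC3Embedded G' G := by
  intro i j k hij hjk hki hij'
  by_contra hcon
  push_neg at hcon
  obtain ⟨h1, h2⟩ := hcon
  have hm1 : ∃ s ∈ ES G', s ≤ eV i k + eV j k := by
    refine ⟨eV i j, ⟨i, j, hij', rfl⟩, ?_⟩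
    rw [Finsupp.le_def]
    intro x
    simp only [Finsupp.add_apply, eV_apply]
    split_ifs <;> omega
  have hm2 : ∃ u ∈ St G 2, u ≤ eV i k + eV j k := by
    refine ⟨eV i k + eV j k, ⟨eV i k ::ₘ {eV j k}, by simp, ?_, by simp⟩, le_refl _⟩
    intro y hy
    rcases Multiset.mem_cons.mp hy with rfl | hy
    · exact ⟨i, k, hki.symm, rfl⟩
    · rw [Multiset.mem_singleton] at hy
      subst hy
      exact ⟨j, k, hjk, rfl⟩
  obtain ⟨v, ⟨a, ⟨p, q, hpq, rfl⟩, b, hb, rfl⟩, hvm⟩ := hc _ hm1 hm2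
  rw [St_one] at hb
  obtain ⟨r, s, hrs, rfl⟩ := hb
  exact c3_bash hpq hrs hij hjk hki h1 h2 hvm

lemma nec_P3 {G' G : SimpleGraph (Fin n)} (h : G' ≤ G)
    (hc : ∀ m : Fin n →₀ ℕ, (∃ s ∈ ES G', s ≤ m) → (∃ u ∈ St G 2, u ≤ m) →
      ∃ v ∈ ES G' + St G 1, v ≤ m) : AlmostP3Embedded G' G := by
  intro i' i j j' d1 d2 d3 hi'i hij hjj' hij' hn5
  by_contra hcon
  push_neg at hcon
  obtain ⟨n1, n2, n3, n4⟩ := hcon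
  have hm1 : ∃ s ∈ ES G', s ≤ eV i' i + eV j j' := by
    refine ⟨eV i j, ⟨i, j, hij', rfl⟩, ?_⟩
    rw [Finsupp.le_def]
    intro x
    simp only [Finsupp.add_apply, eV_apply]
    split_ifs <;> omega
  have hm2 : ∃ u ∈ St G 2, u ≤ eV i' i + eV j j' := by
    refine ⟨eV i' i + eV j j', ⟨eV i' i ::ₘ {eV j j'}, by simp, ?_, by simp⟩, le_refl _⟩
    intro y hy
    rcases Multiset.mem_cons.mp hy with rfl | hy
    · exact ⟨i', i, hi'i, rfl⟩
    · rw [Multiset.mem_singleton] at hy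
      subst hy
      exact ⟨j, j', hjj', rfl⟩
  obtain ⟨v, ⟨a, ⟨p, q, hpq, rfl⟩, b, hb, rfl⟩, hvm⟩ := hc _ hm1 hm2
  rw [St_one] at hb
  obtain ⟨r, s, hrs, rfl⟩ := hb
  exact p3_bash h hpq hrs d1 d2 d3 hi'i.ne hij.ne hjj'.ne n1 n2
    (by rintro ⟨x1, x2⟩; exact n3 x1 x2) (by rintro ⟨x1, x2⟩; exact n4 x1 x2) hn5 hvm

end VVaux

/-- Let `G'` be a subgraph of `G`, `J = I(G')`, `I = I(G)`.  Then
`J ∩ I^t = J·I^{t-1}` for all `t ≥ 1` (vanishing of the Valabrega–Valla module) iff `G'`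
is both an almost `C₃`-embedded and an almost `P₃`-embedded subgraph of `G`. -/
theorem VV_edgeIdeals_vanishes_iff {K : Type} [Field K] {n : ℕ}
    (G G' : SimpleGraph (Fin n)) (h : G' ≤ G) :
    (∀ t : ℕ, 1 ≤ t →
        edgeIdeal K G' ⊓ (edgeIdeal K G) ^ t = edgeIdeal K G' * (edgeIdeal K G) ^ (t - 1)) ↔
      (AlmostC3Embedded G' G ∧ AlmostP3Embedded G' G) := by

  constructor
  · intro hV
    have h2 := (VVaux.eq_iff K h (t := 2) (by norm_num)).mp (hV 2 (by norm_num))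
    exact ⟨VVaux.nec_C3 h h2, VVaux.nec_P3 h h2⟩
  · rintro ⟨hC, hP⟩ t ht
    exact (VVaux.eq_iff K h ht).mpr (fun m h1 h2 => VVaux.exchange h hC hP ht h1 h2)
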